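/- Let T be a tree of sequences, ξ an inductive probability measure on T, and A a front of T. Then ∑' over s ∈ A of ξ(s) = 1. Moreover, for every t ∈ T that is a prefix of some element of A, ξ(t) = ∑' over {s ∈ A : t is a prefix of s} of ξ(s). -/

import Mathlib

open scoped ENNReal
open MeasureTheory

noncomputable section

/-- A tree of sequences: a nonempty set of finite lists of naturals closed under prefixes. -/
def IsTree (T : Set (List ℕ)) : Prop :=
  T.Nonempty ∧ ∀ s t : List ℕ, s <+: t → t ∈ T → s ∈ T

/-- `t` is a maximal node of `T`: it has no successor in `T`. -/
def IsMaxNode (T : Set (List ℕ)) (t : List ℕ) : Prop :=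
  ∀ k : ℕ, t ++ [k] ∉ T

/-- A probability tree on `T`. -/
def IsProbTree (T : Set (List ℕ)) (p : List ℕ → ℕ → ℝ≥0∞) : Prop :=
  ∀ t ∈ T, ¬ IsMaxNode T t →
    (∀ k : ℕ, t ++ [k] ∉ T → p t k = 0) ∧ (∑' k : ℕ, p t k = 1)

/-- The measure induced by a probability tree: `Ξ_p(t) = ∏_{i<|t|} p (t↾i) (t i)`. -/
def Xi (p : List ℕ → ℕ → ℝ≥0∞) (t : List ℕ) : ℝ≥0∞ :=
  ∏ i ∈ Finset.range t.length, p (t.take i) (t.getD i 0)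

/-- An inductive probability measure on `T`. -/
def IsIPM (T : Set (List ℕ)) (ξ : List ℕ → ℝ≥0∞) : Prop :=
  ξ [] = 1 ∧ ∀ t ∈ T, ¬ IsMaxNode T t →
    ξ t = ∑' k : {k : ℕ // t ++ [k] ∈ T}, ξ (t ++ [k.1])

/-- The set of infinite branches of `T`. -/
def limT (T : Set (List ℕ)) : Set (ℕ → ℕ) :=
  {x | ∀ n : ℕ, (List.range n).map x ∈ T}

/-- `T` is pruned: every node has a successor in `T`. -/
def Pruned (T : Set (List ℕ)) : Prop := ∀ t ∈ T, ∃ k : ℕ, t ++ [k] ∈ T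

/-- The basic clopen set `[t]` of branches through `t`. -/
def cyl (T : Set (List ℕ)) (t : List ℕ) : Set ↥(limT T) :=
  {x | (List.range t.length).map x.1 = t}

/-- `A` is a front of `T`. -/
def IsFront (T A : Set (List ℕ)) : Prop :=
  A ⊆ T ∧
  (∀ s ∈ A, ∀ t ∈ A, s <+: t → s = t) ∧
  (∀ x ∈ limT T, ∃ n : ℕ, (List.range n).map x ∈ A) ∧
  (∀ t ∈ T, IsMaxNode T t → ∃ s ∈ A, s <+: t)

/-- The sum of `ξ` over elements of `A` extending `t`. -/
noncomputable def fA (A : Set (List ℕ)) (ξ : List ℕ → ℝ≥0∞) (t : List ℕ) : ℝ≥0∞ :=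
  ∑' s : {s : List ℕ // s ∈ A ∧ t <+: s}, ξ s.1

lemma key_coord {t s : List ℕ} (h : t <+: s) (hne : t ≠ s) :
    t ++ [s.getD t.length 0] <+: s := by
  obtain ⟨r, rfl⟩ := h
  cases r with
  | nil => simp at hne
  | cons a r' =>
    have : (t ++ a :: r').getD t.length 0 = a := by
      rw [List.getD_append_right _ _ _ _ le_rfl]
      simp
    rw [this]
    exact ⟨r', by simp⟩

/-- Finite partial sums over the antichain below `t` are bounded by `ξ t`. -/
lemma finsum_le (T A : Set (List ℕ)) (ξ : List ℕ → ℝ≥0∞)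
    (hT : IsTree T) (hξ : IsIPM T ξ) (hA : IsFront T A) :
    ∀ n : ℕ, ∀ t ∈ T, ∀ F : Finset (List ℕ),
      (∀ s ∈ F, s ∈ A ∧ t <+: s ∧ s.length ≤ t.length + n) →
      ∑ s ∈ F, ξ s ≤ ξ t := by
  intro n
  induction n with
  | zero =>
    intro t ht F hF
    have hsub : F ⊆ {t} := by
      intro s hs
      obtain ⟨_, hpre, hlen⟩ := hF s hs
      simp only [Finset.mem_singleton]
      exact (hpre.eq_of_length (le_antisymm hpre.length_le (by simpa using hlen))).symm
    calc ∑ s ∈ F, ξ s ≤ ∑ s ∈ ({t} : Finset (List ℕ)), ξ s :=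
          Finset.sum_le_sum_of_subset hsub
      _ = ξ t := by simp
  | succ n ih =>
    intro t ht F hF
    by_cases htF : t ∈ F
    · -- then F = {t} by the antichain property
      have hsub : F ⊆ {t} := by
        intro s hs
        simp only [Finset.mem_singleton]
        exact (hA.2.1 t (hF t htF).1 s (hF s hs).1 (hF s hs).2.1).symm
      calc ∑ s ∈ F, ξ s ≤ ∑ s ∈ ({t} : Finset (List ℕ)), ξ s :=
            Finset.sum_le_sum_of_subset hsub
        _ = ξ t := by simp
    · rcases F.eq_empty_or_nonempty with rfl | hFne
      · simp
      set g : List ℕ → ℕ := fun s => s.getD t.length 0 with hg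
      have hkey : ∀ s ∈ F, t ++ [g s] <+: s := by
        intro s hs
        exact key_coord (hF s hs).2.1 (fun h => htF (h ▸ hs))
      have hmem : ∀ k ∈ F.image g, t ++ [k] ∈ T := by
        intro k hk
        obtain ⟨s, hs, rfl⟩ := Finset.mem_image.mp hk
        exact hT.2 _ s (hkey s hs) (hA.1 (hF s hs).1)
      have hfib := Finset.sum_fiberwise_of_maps_to (s := F) (t := F.image g) (g := g)
        (fun s hs => Finset.mem_image_of_mem g hs) ξ
      rw [← hfib]
      have hstep : ∀ k ∈ F.image g, ∑ s ∈ F.filter (fun s => g s = k), ξ s ≤ ξ (t ++ [k]) := by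
        intro k hk
        refine ih (t ++ [k]) (hmem k hk) _ ?_
        intro s hs
        rw [Finset.mem_filter] at hs
        refine ⟨(hF s hs.1).1, hs.2 ▸ hkey s hs.1, ?_⟩
        have := (hF s hs.1).2.2
        simp only [List.length_append, List.length_singleton]
        omega
      calc ∑ k ∈ F.image g, ∑ s ∈ F.filter (fun s => g s = k), ξ s
          ≤ ∑ k ∈ F.image g, ξ (t ++ [k]) := Finset.sum_le_sum hstep
        _ = ∑ k ∈ F.image g, ({k | t ++ [k] ∈ T}).indicator (fun k => ξ (t ++ [k])) k := by
            refine Finset.sum_congr rfl fun k hk => ?_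
            exact (Set.indicator_of_mem (show k ∈ {k | t ++ [k] ∈ T} from hmem k hk)
              (fun k => ξ (t ++ [k]))).symm
        _ ≤ ∑' k : ℕ, ({k | t ++ [k] ∈ T}).indicator (fun k => ξ (t ++ [k])) k :=
            ENNReal.sum_le_tsum _
        _ = ∑' k : {k : ℕ // t ++ [k] ∈ T}, ξ (t ++ [k.1]) := (tsum_subtype _ _).symm
        _ = ξ t := by
            refine (hξ.2 t ht ?_).symm
            intro hmax
            obtain ⟨s, hs⟩ := hFne
            exact hmax (g s) (hmem (g s) (Finset.mem_image_of_mem g hs))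

lemma fA_le (T A : Set (List ℕ)) (ξ : List ℕ → ℝ≥0∞)
    (hT : IsTree T) (hξ : IsIPM T ξ) (hA : IsFront T A)
    (t : List ℕ) (ht : t ∈ T) : fA A ξ t ≤ ξ t := by
  rw [fA, ENNReal.tsum_eq_iSup_sum]
  refine iSup_le fun F => ?_
  rw [← Finset.sum_image (g := Subtype.val) (f := ξ)
    (fun x _ y _ h => Subtype.ext h)]
  exact finsum_le T A ξ hT hξ hA
    ((F.image Subtype.val).sup (fun s => s.length)) t ht _
    (fun s hs => by
      obtain ⟨⟨s', hs'⟩, hmem, rfl⟩ := Finset.mem_image.mp hs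
      exact ⟨hs'.1, hs'.2, (Finset.le_sup hs).trans (Nat.le_add_left _ _)⟩)

/-- Summing `fA` over the children of `t` is at most `fA t`. -/
lemma tsum_fA_children_le (T A : Set (List ℕ)) (ξ : List ℕ → ℝ≥0∞) (t : List ℕ) :
    ∑' k : {k : ℕ // t ++ [k] ∈ T}, fA A ξ (t ++ [k.1]) ≤ fA A ξ t := by
  simp only [fA]
  rw [← ENNReal.tsum_sigma' (fun p : Σ k : {k : ℕ // t ++ [k] ∈ T},
        {s : List ℕ // s ∈ A ∧ t ++ [k.1] <+: s} => ξ p.2.1)]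
  refine Summable.tsum_le_tsum_of_inj
    (fun p => ⟨p.2.1, p.2.2.1, ((t.prefix_append [p.1.1]).trans p.2.2.2)⟩)
    ?_ (fun _ _ => zero_le) (fun _ => le_rfl) ENNReal.summable ENNReal.summable
  rintro ⟨⟨k, hk⟩, ⟨s, hs, hps⟩⟩ ⟨⟨k', hk'⟩, ⟨s', hs', hps'⟩⟩ h
  simp only [Subtype.mk.injEq] at h
  subst h
  have h1 : t ++ [k] <+: t ++ [k'] := List.prefix_of_prefix_length_le hps hps' (by simp)
  have h2 := h1.eq_of_length (by simp)
  have hkk : k = k' := by simpa using List.append_cancel_left h2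
  subst hkk
  rfl


lemma step_lemma (T A : Set (List ℕ)) (ξ : List ℕ → ℝ≥0∞)
    (hT : IsTree T) (hξ : IsIPM T ξ) (hA : IsFront T A)
    (t : List ℕ) (h : t ∈ T ∧ (∀ s, s <+: t → s ∉ A) ∧ ¬ ξ t ≤ fA A ξ t) :
    ∃ k : ℕ, (t ++ [k] ∈ T ∧ (∀ s, s <+: t ++ [k] → s ∉ A) ∧
      ¬ ξ (t ++ [k]) ≤ fA A ξ (t ++ [k])) := by
  obtain ⟨ht, hpre, hlt⟩ := h
  have hnmax : ¬ IsMaxNode T t := by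
    intro hmax
    obtain ⟨s, hsA, hst⟩ := hA.2.2.2 t ht hmax
    exact hpre s hst hsA
  by_contra hcon
  push_neg at hcon
  have hch : ∀ k : ℕ, t ++ [k] ∈ T → ξ (t ++ [k]) ≤ fA A ξ (t ++ [k]) := by
    intro k hk
    by_cases hAk : ∀ s, s <+: t ++ [k] → s ∉ A
    · exact hcon k hk hAk
    · push_neg at hAk
      obtain ⟨s, hspre, hsA⟩ := hAk
      have hs_eq : s = t ++ [k] := by
        rcases Nat.lt_or_ge s.length (t ++ [k]).length with hl | hl
        · exfalso
          have hst : s <+: t := List.prefix_of_prefix_length_le hspre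
            (t.prefix_append [k]) (by simp at hl ⊢; omega)
          exact hpre s hst hsA
        · exact hspre.eq_of_length (le_antisymm hspre.length_le hl)
      subst hs_eq
      exact ENNReal.le_tsum
        (⟨t ++ [k], hsA, List.prefix_refl _⟩ : {s : List ℕ // s ∈ A ∧ (t ++ [k]) <+: s})
  apply hlt
  calc ξ t = ∑' k : {k : ℕ // t ++ [k] ∈ T}, ξ (t ++ [k.1]) := hξ.2 t ht hnmax
    _ ≤ ∑' k : {k : ℕ // t ++ [k] ∈ T}, fA A ξ (t ++ [k.1]) :=
        ENNReal.tsum_le_tsum (fun k => hch k.1 k.2)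
    _ ≤ fA A ξ t := tsum_fA_children_le T A ξ t

lemma good (T A : Set (List ℕ)) (ξ : List ℕ → ℝ≥0∞)
    (hT : IsTree T) (hξ : IsIPM T ξ) (hA : IsFront T A)
    (t0 : List ℕ) (ht0 : t0 ∈ T) (hpre0 : ∀ s, s <+: t0 → s ∉ A) :
    ξ t0 = fA A ξ t0 := by
  refine le_antisymm ?_ (fA_le T A ξ hT hξ hA t0 ht0)
  by_contra hlt
  set P : List ℕ → Prop := fun t => t ∈ T ∧ (∀ s, s <+: t → s ∉ A) ∧ ¬ ξ t ≤ fA A ξ t with hP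
  have hstepP : ∀ t, P t → ∃ k, P (t ++ [k]) := fun t h => step_lemma T A ξ hT hξ hA t h
  choose nxt hnxt using hstepP
  have h0 : P t0 := ⟨ht0, hpre0, hlt⟩
  let u : ℕ → {l : List ℕ // P l} := fun n =>
    Nat.rec ⟨t0, h0⟩ (fun _ v => ⟨v.1 ++ [nxt v.1 v.2], hnxt v.1 v.2⟩) n
  have hu_succ : ∀ n, (u (n+1)).1 = (u n).1 ++ [nxt (u n).1 (u n).2] := fun n => rfl
  have hu_len : ∀ n, (u n).1.length = t0.length + n := by
    intro n
    induction n with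
    | zero => rfl
    | succ n ih => rw [hu_succ n]; simp [ih]; omega
  have hu_mono : ∀ n m, n ≤ m → (u n).1 <+: (u m).1 := by
    intro n m hnm
    induction m, hnm using Nat.le_induction with
    | base => exact List.prefix_refl _
    | succ m hm ih => exact ih.trans ⟨_, (hu_succ m).symm⟩
  set x : ℕ → ℕ := fun i => (u (i+1)).1.getD i 0 with hxdef
  have hx : ∀ n, (List.range n).map x = (u n).1.take n := by
    intro n
    induction n with
    | zero => simp
    | succ n ih =>
      rw [List.range_succ, List.map_append, ih]
      have h1 : (u (n+1)).1.take n = (u n).1.take n := by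
        obtain ⟨r, hr⟩ := hu_mono n (n+1) (Nat.le_succ n)
        rw [← hr, List.take_append_of_le_length (by rw [hu_len n]; omega)]
      have hlen : n < (u (n+1)).1.length := by have := hu_len (n+1); omega
      have h2 : (u (n+1)).1.take (n+1) = (u (n+1)).1.take n ++ [x n] := by
        rw [List.take_succ, List.getElem?_eq_getElem hlen]
        simp [hxdef, List.getD_eq_getElem?_getD, List.getElem?_eq_getElem hlen]
      rw [h2, h1]
      simp
  have hxlim : x ∈ limT T := by
    intro n
    rw [hx n]
    exact hT.2 _ _ (List.take_prefix n (u n).1) (u n).2.1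
  obtain ⟨n, hn⟩ := hA.2.2.1 x hxlim
  rw [hx n] at hn
  exact (u n).2.2.1 _ (List.take_prefix n (u n).1) hn

theorem stmt2 (T A : Set (List ℕ)) (ξ : List ℕ → ℝ≥0∞)
    (hT : IsTree T) (hξ : IsIPM T ξ) (hA : IsFront T A) :
    (∑' s : ↥A, ξ s.1 = 1) ∧
    (∀ t ∈ T, (∃ s ∈ A, t <+: s) →
      ξ t = ∑' s : {s : List ℕ // s ∈ A ∧ t <+: s}, ξ s.1) := by
  have hnil : [] ∈ T := by
    obtain ⟨t, ht⟩ := hT.1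
    exact hT.2 [] t List.nil_prefix ht
  have part2 : ∀ t ∈ T, (∃ s ∈ A, t <+: s) → ξ t = fA A ξ t := by
    intro t ht hex
    obtain ⟨s, hsA, hts⟩ := hex
    by_cases hp : ∀ s', s' <+: t → s' ∉ A
    · exact good T A ξ hT hξ hA t ht hp
    · push_neg at hp
      obtain ⟨s', hs't, hs'A⟩ := hp
      have hss : s' = s := hA.2.1 s' hs'A s hsA (hs't.trans hts)
      subst hss
      have htA : t ∈ A := by
        have : s' = t := hs't.eq_of_length (le_antisymm hs't.length_le hts.length_le)
        rw [← this]; exact hs'A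
      refine le_antisymm ?_ (fA_le T A ξ hT hξ hA t ht)
      exact ENNReal.le_tsum
        (⟨t, htA, List.prefix_refl t⟩ : {s : List ℕ // s ∈ A ∧ t <+: s})
  refine ⟨?_, fun t ht hex => by rw [part2 t ht hex, fA]⟩
  have h1 : ξ [] = fA A ξ [] := by
    by_cases hnA : [] ∈ A
    · exact part2 [] hnil ⟨[], hnA, List.nil_prefix⟩
    · refine good T A ξ hT hξ hA [] hnil ?_
      intro s hs
      rw [List.prefix_nil.mp hs]
      exact hnA
  have h2 : (∑' s : ↥A, ξ s.1) = fA A ξ [] := by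
    refine Equiv.tsum_eq (Equiv.subtypeEquivRight fun s => ?_)
      (fun s : {s : List ℕ // s ∈ A ∧ [] <+: s} => ξ s.1)
    exact (and_iff_left List.nil_prefix).symm
  rw [h2, ← h1, hξ.1]
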